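/- Let φ: ℕ → (0,1) and suppose φ is monotone decreasing. Then for every n ≥ 1 and every real t, |(1/2)(1+φ(n)) + (1/2)(1−φ(n))·e^{2πi·2^{−n}t}| ≤ 1 − 2(1−φ(1))·‖2^{−n}t‖². -/

import Mathlib

open Real

set_option maxHeartbeats 1000000 in

theorem coin_factor_bound (φ : ℕ → ℝ) (hφ : ∀ n, 0 < φ n ∧ φ n < 1)
    (hanti : ∀ n, φ (n + 1) ≤ φ n) (n : ℕ) (hn : 1 ≤ n) (t : ℝ) :
    ‖((((1 + φ n) / 2 : ℝ) : ℂ) +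
        (((1 - φ n) / 2 : ℝ) : ℂ) * Complex.exp (2 * (π : ℂ) * Complex.I * ((t / 2 ^ n : ℝ) : ℂ)))‖
      ≤ 1 - 2 * (1 - φ 1) * |t / 2 ^ n - round (t / 2 ^ n)| ^ 2 := by
  obtain ⟨hφn0, hφn1⟩ := hφ n
  obtain ⟨hφ10, hφ11⟩ := hφ 1
  have hmono : φ n ≤ φ 1 := by
    clear hφn0 hφn1
    induction n with
    | zero => omega
    | succ k ih =>
      rcases Nat.eq_or_lt_of_le hn with h | h
      · simp [← h]
      · exact (hanti k).trans (ih (by omega))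
  set x : ℝ := t / 2 ^ n with hx
  set y : ℝ := x - round x with hy
  have hy2 : |y| ≤ 1 / 2 := abs_sub_round x
  clear_value x
  clear_value y
  -- rewrite the complex expression
  have a := (1 + φ n) / 2
  have hrw : (((1 + φ n) / 2 : ℝ) : ℂ) +
        (((1 - φ n) / 2 : ℝ) : ℂ) * Complex.exp (2 * (π : ℂ) * Complex.I * ((x : ℝ) : ℂ))
      = (((1 + φ n) / 2 + (1 - φ n) / 2 * Real.cos (2 * π * x) : ℝ) : ℂ)
        + (((1 - φ n) / 2 * Real.sin (2 * π * x) : ℝ) : ℂ) * Complex.I := by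
    rw [show (2 * (π : ℂ) * Complex.I * ((x : ℝ) : ℂ)) = ((2 * π * x : ℝ) : ℂ) * Complex.I by
      push_cast; ring, Complex.exp_mul_I]
    push_cast [Complex.ofReal_cos, Complex.ofReal_sin]
    ring
  rw [hrw, Complex.norm_add_mul_I]
  -- key trig facts
  have hsin2 : Real.sin (π * x) ^ 2 = Real.sin (π * y) ^ 2 := by
    have : π * x = π * y + (round x : ℤ) * π := by rw [hy]; ring
    rw [this, Real.sin_add_int_mul_pi, mul_pow]
    have h1 : ((-1 : ℝ) ^ round x) ^ 2 = 1 := by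
      rw [sq, ← zpow_add₀ (by norm_num : (-1 : ℝ) ≠ 0)]
      exact Even.neg_one_zpow ⟨round x, rfl⟩
    rw [h1, one_mul]
  have hcos : Real.cos (2 * π * x) = 1 - 2 * Real.sin (π * x) ^ 2 := by
    rw [show (2 * π * x) = 2 * (π * x) by ring, Real.cos_two_mul, Real.cos_sq']
    ring
  have hsinlb : 2 * |y| ≤ |Real.sin (π * y)| := by
    have h := Real.mul_abs_le_abs_sin (x := π * y) ?_
    · rwa [abs_mul, abs_of_pos Real.pi_pos, ← mul_assoc, div_mul_cancel₀ 2 Real.pi_pos.ne'] at h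
    · rw [abs_mul, abs_of_pos Real.pi_pos]
      calc π * |y| ≤ π * (1/2) := by nlinarith [Real.pi_pos]
        _ = π / 2 := by ring
  have hsinsq : 4 * y ^ 2 ≤ Real.sin (π * y) ^ 2 := by
    have := mul_self_le_mul_self (by positivity) hsinlb
    calc 4 * y ^ 2 = (2 * |y|) * (2 * |y|) := by rw [← sq_abs]; ring
      _ ≤ |Real.sin (π * y)| * |Real.sin (π * y)| := this
      _ = Real.sin (π * y) ^ 2 := by rw [← sq_abs]; ring
  have hR0 : (0 : ℝ) ≤ 1 - 2 * (1 - φ 1) * |y| ^ 2 := by nlinarith [abs_nonneg y]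
  have hsq : ((1 + φ n) / 2 + (1 - φ n) / 2 * Real.cos (2 * π * x)) ^ 2
      + ((1 - φ n) / 2 * Real.sin (2 * π * x)) ^ 2
      ≤ (1 - 2 * (1 - φ 1) * |y| ^ 2) ^ 2 := by
    have hpyth : Real.sin (2 * π * x) ^ 2 + Real.cos (2 * π * x) ^ 2 = 1 :=
      Real.sin_sq_add_cos_sq _
    have hc : Real.cos (2 * π * x) = 1 - 2 * Real.sin (π * y) ^ 2 := by rw [hcos, hsin2]
    have hs : Real.sin (2 * π * x) ^ 2 = 1 - (1 - 2 * Real.sin (π * y) ^ 2) ^ 2 := by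
      rw [← hc]; nlinarith [hpyth]
    rw [sq_abs, hc]
    have hL : ((1 + φ n) / 2 + (1 - φ n) / 2 * (1 - 2 * Real.sin (π * y) ^ 2)) ^ 2
        + ((1 - φ n) / 2 * Real.sin (2 * π * x)) ^ 2
        = 1 - (1 - φ n ^ 2) * Real.sin (π * y) ^ 2 := by
      linear_combination ((1 - φ n) / 2) ^ 2 * hs
    rw [hL]
    nlinarith [mul_nonneg (show (0:ℝ) ≤ φ 1 - φ n ^ 2 by nlinarith)
        (sq_nonneg (Real.sin (π * y))),
      mul_nonneg (show (0:ℝ) ≤ 1 - φ 1 by linarith)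
        (show (0:ℝ) ≤ Real.sin (π * y) ^ 2 - 4 * y ^ 2 by linarith),
      sq_nonneg ((1 - φ 1) * y ^ 2)]
  calc Real.sqrt _ ≤ Real.sqrt ((1 - 2 * (1 - φ 1) * |y| ^ 2) ^ 2) := Real.sqrt_le_sqrt hsq
    _ = 1 - 2 * (1 - φ 1) * |y| ^ 2 := Real.sqrt_sq hR0
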